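/- For any real t₀, the radius of convergence of the Taylor series of 1/cosh centered at t₀ equals √(t₀² + π²/4); in particular it is finite for every real t₀. -/

import Mathlib

open Complex Metric Filter Topology NNReal ENNReal

theorem stmt_6 (t₀ : ℝ) :
    ∃ p : FormalMultilinearSeries ℂ ℂ ℂ,
      HasFPowerSeriesOnBall (fun z : ℂ => (Complex.cosh z)⁻¹) p (t₀ : ℂ)
        (ENNReal.ofReal (Real.sqrt (t₀ ^ 2 + Real.pi ^ 2 / 4))) ∧
      p.radius = ENNReal.ofReal (Real.sqrt (t₀ ^ 2 + Real.pi ^ 2 / 4)) ∧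
      p.radius < ⊤ := by
  set f : ℂ → ℂ := fun z : ℂ => (Complex.cosh z)⁻¹ with hf
  set r : ℝ := Real.sqrt (t₀ ^ 2 + Real.pi ^ 2 / 4) with hrdef
  have hπ : (0:ℝ) < Real.pi := Real.pi_pos
  have hrsq : r ^ 2 = t₀ ^ 2 + Real.pi ^ 2 / 4 := by
    rw [hrdef, Real.sq_sqrt (by positivity)]
  have hr : 0 < r := Real.sqrt_pos.2 (by positivity)
  -- cosh has no zero in the open ball of radius r around t₀
  have hcosh : ∀ z : ℂ, dist z (t₀ : ℂ) < r → Complex.cosh z ≠ 0 := by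
    intro z hz h0
    rw [← Complex.cos_mul_I, Complex.cos_eq_zero_iff] at h0
    obtain ⟨k, hk⟩ := h0
    have hzeq : z = -((2 * (k:ℂ) + 1) * (Real.pi:ℂ) / 2) * Complex.I := by
      have h2 : z * Complex.I * Complex.I = ((2 * (k:ℂ) + 1) * (Real.pi:ℂ) / 2) * Complex.I := by
        rw [hk]
      rw [mul_assoc, Complex.I_mul_I, mul_neg_one] at h2
      linear_combination -h2
    set c : ℝ := (2 * (k:ℝ) + 1) * Real.pi / 2 with hcdef
    have hre : (z - (t₀:ℂ)).re = -t₀ := by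
      rw [hzeq]; simp
    have him : (z - (t₀:ℂ)).im = -c := by
      rw [hzeq, hcdef]; simp
    have hk1 : (1:ℝ) ≤ (2 * (k:ℝ) + 1) ^ 2 := by
      have h1 : (1:ℤ) ≤ (2 * k + 1) ^ 2 := by rcases le_or_gt 0 k with h | h <;> nlinarith
      exact_mod_cast h1
    have hc2 : Real.pi ^ 2 / 4 ≤ c ^ 2 := by
      have h3 : c ^ 2 = (2 * (k:ℝ) + 1) ^ 2 * (Real.pi ^ 2 / 4) := by
        rw [hcdef]; ring
      rw [h3]; nlinarith [sq_nonneg Real.pi]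
    have hdist : r ≤ dist z (t₀:ℂ) := by
      rw [Complex.dist_eq, Complex.norm_def, Complex.normSq_apply, hre, him, hrdef]
      apply Real.sqrt_le_sqrt
      nlinarith
    linarith
  -- differentiability
  have fdiff : ∀ z : ℂ, Complex.cosh z ≠ 0 → DifferentiableAt ℂ f z := fun z hz =>
    (Complex.differentiable_cosh z).inv hz
  -- power series on closed balls of radius R < r
  have hball : ∀ R : ℝ≥0, 0 < (R:ℝ) → (R:ℝ) < r →
      HasFPowerSeriesOnBall f (cauchyPowerSeries f (t₀:ℂ) R) (t₀:ℂ) R := by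
    intro R hR0 hRr
    refine DifferentiableOn.hasFPowerSeriesOnBall ?_ (by exact_mod_cast hR0)
    intro z hz
    exact (fdiff z (hcosh z (lt_of_le_of_lt (mem_closedBall.1 hz) hRr))).differentiableWithinAt
  set R₀ : ℝ≥0 := ⟨r / 2, by positivity⟩ with hR₀
  have hR₀0 : 0 < (R₀:ℝ) := by show (0:ℝ) < r / 2; positivity
  have hR₀r : (R₀:ℝ) < r := by
    show r / 2 < r
    linarith
  set p := cauchyPowerSeries f (t₀:ℂ) R₀ with hp
  have hbase : HasFPowerSeriesOnBall f p (t₀:ℂ) R₀ := hball R₀ hR₀0 hR₀r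
  have hEq : ∀ R : ℝ≥0, 0 < (R:ℝ) → (R:ℝ) < r → cauchyPowerSeries f (t₀:ℂ) R = p :=
    fun R h0 h1 =>
      (hball R h0 h1).hasFPowerSeriesAt.eq_formalMultilinearSeries hbase.hasFPowerSeriesAt
  -- the power series on the full open ball of radius r
  have H : HasFPowerSeriesOnBall f p (t₀:ℂ) (ENNReal.ofReal r) := by
    refine ⟨?_, ENNReal.ofReal_pos.2 hr, ?_⟩
    · refine ENNReal.le_of_forall_nnreal_lt fun R hR => ?_
      have hRr : (R:ℝ) < r := by
        have := (ENNReal.lt_ofReal_iff_toReal_lt (a := (R:ℝ≥0∞)) ENNReal.coe_ne_top).1 hR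
        simpa using this
      rcases eq_or_lt_of_le (show (0:ℝ≥0) ≤ R from zero_le) with h0 | h0
      · simp [← h0]
      · have h0' : 0 < (R:ℝ) := by exact_mod_cast h0
        have := (hball R h0' hRr).r_le
        rwa [hEq R h0' hRr] at this
    · intro y hy
      have hy' : ‖y‖ < r := by
        rw [EMetric.mem_ball, edist_zero_right] at hy
        have := (ENNReal.lt_ofReal_iff_toReal_lt (a := (‖y‖₊:ℝ≥0∞)) ENNReal.coe_ne_top).1 hy
        simpa using this
      obtain ⟨R', hR'1, hR'2⟩ := exists_between hy'
      have hR'0 : 0 < R' := lt_of_le_of_lt (norm_nonneg y) hR'1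
      have hR'p : 0 < ((R'.toNNReal : ℝ≥0) : ℝ) := by
        rw [Real.coe_toNNReal _ hR'0.le]; exact hR'0
      have hR'r : ((R'.toNNReal : ℝ≥0) : ℝ) < r := by
        rw [Real.coe_toNNReal _ hR'0.le]; exact hR'2
      have hmem : y ∈ EMetric.ball (0:ℂ) ((R'.toNNReal : ℝ≥0) : ℝ≥0∞) := by
        change edist _ (0:ℂ) < _
        rw [edist_zero_right]
        exact (ENNReal.lt_ofReal_iff_toReal_lt ENNReal.coe_ne_top).2 (by simpa using hR'1)
      have := (hball R'.toNNReal hR'p hR'r).hasSum hmem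
      rwa [hEq R'.toNNReal hR'p hR'r] at this
  have hradius : p.radius = ENNReal.ofReal r := by
    refine le_antisymm (not_lt.1 fun hlt' => ?_) H.r_le
    -- the nearest zero of cosh
    set z₁ : ℂ := ((Real.pi / 2 : ℝ) : ℂ) * Complex.I with hz₁
    have hz₁dist : dist z₁ (t₀:ℂ) = r := by
      rw [Complex.dist_eq, Complex.norm_def, Complex.normSq_apply, hrdef]
      congr 1
      simp [hz₁]
      ring
    have hz₁cosh : Complex.cosh z₁ = 0 := by
      rw [hz₁, Complex.cosh_mul_I]
      exact_mod_cast Complex.cos_pi_div_two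
    set g : ℂ → ℂ := fun z => p.sum (z - (t₀:ℂ)) with hg
    set h : ℂ → ℂ := fun z => Complex.cosh z * g z with hh
    have hz₁mem : z₁ - (t₀:ℂ) ∈ EMetric.ball (0:ℂ) p.radius := by
      change edist _ (0:ℂ) < _
      rw [edist_zero_right]
      calc ((‖z₁ - (t₀:ℂ)‖₊ : ℝ≥0) : ℝ≥0∞) = ENNReal.ofReal (dist z₁ (t₀:ℂ)) := by
            rw [dist_eq_norm]; exact (ofReal_norm _).symm
        _ = ENNReal.ofReal r := by rw [hz₁dist]
        _ < p.radius := hlt'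
    have hgcont : ContinuousAt g z₁ := by
      have hpc : ContinuousAt p.sum (z₁ - (t₀:ℂ)) :=
        (FormalMultilinearSeries.continuousOn (p := p)).continuousAt (EMetric.isOpen_ball.mem_nhds hz₁mem)
      have hinner : ContinuousAt (fun z : ℂ => z - (t₀:ℂ)) z₁ :=
        (continuous_id.sub continuous_const).continuousAt
      exact ContinuousAt.comp (g := p.sum) (f := fun z : ℂ => z - (t₀:ℂ)) hpc hinner
    have hhcont : ContinuousAt h z₁ := Complex.continuous_cosh.continuousAt.mul hgcont
    have hone : ∀ z ∈ Metric.ball (t₀:ℂ) r, h z = 1 := by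
      intro z hz
      rw [mem_ball] at hz
      have hmem : z - (t₀:ℂ) ∈ EMetric.ball (0:ℂ) (ENNReal.ofReal r) := by
        change edist _ (0:ℂ) < _
        rw [edist_zero_right]
        calc ((‖z - (t₀:ℂ)‖₊ : ℝ≥0) : ℝ≥0∞) = ENNReal.ofReal (dist z (t₀:ℂ)) := by
              rw [dist_eq_norm]; exact (ofReal_norm _).symm
          _ < ENNReal.ofReal r := ENNReal.ofReal_lt_ofReal_iff hr |>.2 hz
      have hsum := H.sum hmem
      rw [add_sub_cancel] at hsum
      have : g z = f z := hsum.symm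
      rw [hh]
      simp only [this, hf]
      exact mul_inv_cancel₀ (hcosh z hz)
    have hz₁cl : z₁ ∈ closure (Metric.ball (t₀:ℂ) r) := by
      rw [closure_ball (t₀:ℂ) hr.ne']
      exact mem_closedBall.2 hz₁dist.le
    haveI : (𝓝[Metric.ball (t₀:ℂ) r] z₁).NeBot :=
      mem_closure_iff_nhdsWithin_neBot.1 hz₁cl
    have T1 : Tendsto h (𝓝[Metric.ball (t₀:ℂ) r] z₁) (𝓝 (h z₁)) :=
      (hhcont.continuousWithinAt (s := Metric.ball (t₀:ℂ) r)).tendsto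
    have T2 : Tendsto h (𝓝[Metric.ball (t₀:ℂ) r] z₁) (𝓝 1) := by
      refine Tendsto.congr' ?_ tendsto_const_nhds
      exact (eventually_nhdsWithin_of_forall hone).mono fun z hz => hz.symm
    have h1 : h z₁ = 1 := tendsto_nhds_unique T1 T2
    rw [hh] at h1
    simp only [hz₁cosh, zero_mul] at h1
    exact zero_ne_one h1
  exact ⟨p, H, hradius, hradius ▸ ENNReal.ofReal_lt_top⟩
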